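/- In the biased derived subdivision Δ' of an induced pair Γ ⊆ Δ, every simplex σ of Δ' not contained in Γ decomposes uniquely as a disjoint union of a (possibly empty) simplex τ of Γ and a nonempty chain σ_1 ⊊ σ_2 ⊊ … ⊊ σ_k of simplices of Δ not in Γ, with τ ⊆ σ_1. -/
import Mathlib


open scoped Classical

namespace Fary

variable {V : Type*}

/-- A simplicial complex: a family of finite sets closed under taking subsets. -/
def IsComplex (K : Set (Finset V)) : Prop := ∀ s ∈ K, ∀ t ⊆ s, t ∈ K

/-- The star of a simplex `σ`: all subsets of simplices of `K` containing `σ`. -/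
def star (σ : Finset V) (K : Set (Finset V)) : Set (Finset V) :=
  {t | ∃ ρ ∈ K, σ ⊆ ρ ∧ t ⊆ ρ}

/-- The set of faces of a single simplex `τ`. -/
def facesOf (τ : Finset V) : Set (Finset V) := {ρ | ρ ⊆ τ}

/-- `Γ` is an induced subcomplex of `Δ`. -/
def Induced (Γ Δ : Set (Finset V)) : Prop :=
  Γ ⊆ Δ ∧ ∀ s ∈ Δ, (∀ v ∈ s, {v} ∈ Γ) → s ∈ Γ

/-- `Γ` is a strongly induced subcomplex of `Δ`: for every simplex of `Δ` not in `Γ`,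
the intersection of `Γ` with its star is the set of faces of a single simplex of `Γ`. -/
def StronglyInduced (Γ Δ : Set (Finset V)) : Prop :=
  Γ ⊆ Δ ∧ ∀ σ ∈ Δ, σ ∉ Γ → ∃ τ ∈ Γ, Γ ∩ star σ Δ = facesOf τ

/-- The derived (barycentric) subdivision: its simplices are the chains (under inclusion)
of nonempty simplices of `Δ`. -/
def derived (Δ : Set (Finset V)) : Set (Finset (Finset V)) :=
  {C | (↑C : Set (Finset V)) ⊆ {s | s ∈ Δ ∧ s.Nonempty} ∧
       IsChain (· ⊆ ·) (↑C : Set (Finset V))}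

/-- The biased derived subdivision of a pair `Γ ⊆ Δ`: simplices are
`τ ∪ {v_{σ₁}, …, v_{σ_k}}` with `τ ∈ Γ`, `σ₁ ⊂ … ⊂ σ_k` simplices of `Δ` not in `Γ`
and `τ ⊆ σ₁`. Old vertices are `Sum.inl`, the new vertex `v_σ` is `Sum.inr σ`. -/
def biased [DecidableEq V] (Γ Δ : Set (Finset V)) : Set (Finset (V ⊕ Finset V)) :=
  {t | ∃ τ ∈ Γ, ∃ C : Finset (Finset V),
    (↑C : Set (Finset V)) ⊆ {s | s ∈ Δ ∧ s ∉ Γ} ∧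
    IsChain (· ⊆ ·) (↑C : Set (Finset V)) ∧
    (∀ s ∈ C, τ ⊆ s) ∧
    t = τ.image Sum.inl ∪ C.image Sum.inr}

/-- The copy of a complex `Γ` over `V` inside the vertex type `V ⊕ Finset V`. -/
def inlify [DecidableEq V] (Γ : Set (Finset V)) : Set (Finset (V ⊕ Finset V)) :=
  {t | ∃ s ∈ Γ, t = s.image Sum.inl}

/-- The vertex map of the edge contraction identifying `b` with `a`. -/
def cmap [DecidableEq V] (a b : V) (v : V) : V := if v = b then a else v

/-- The edge contraction `C_e(K)` at `e = {a,b}`: images of simplices under `cmap a b`. -/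
def contract [DecidableEq V] (a b : V) (K : Set (Finset V)) : Set (Finset V) :=
  {t | ∃ s ∈ K, t = s.image (cmap a b)}

/-- A missing simplex of `K`: not a simplex, but all proper subsets are simplices. -/
def Missing (K : Set (Finset V)) (m : Finset V) : Prop := m ∉ K ∧ ∀ t ⊂ m, t ∈ K

/-- The stellar subdivision of `Δ` at `σ`, with new vertex `none`. -/
def stellar [DecidableEq V] (σ : Finset V) (Δ : Set (Finset V)) : Set (Finset (Option V)) :=
  {t | (∃ s ∈ Δ, ¬ σ ⊆ s ∧ t = s.image some) ∨
       (∃ τ ρ : Finset V, τ ⊂ σ ∧ ρ ∩ σ = ∅ ∧ σ ∪ ρ ∈ Δ ∧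
         t = insert none ((τ ∪ ρ).image some))}

/-- The edge subdivision `S_e` at the edge `e = {a,b}` is the stellar subdivision at `e`. -/
def subdivEdge [DecidableEq V] (a b : V) (K : Set (Finset V)) : Set (Finset (Option V)) :=
  stellar {a, b} K

/-- `s` is a facet (maximal simplex) of `K`. -/
def IsFacet (K : Set (Finset V)) (s : Finset V) : Prop :=
  s ∈ K ∧ ∀ t ∈ K, s ⊆ t → t = s

end Fary

namespace Fary

lemma union_image_inj {V : Type*} [DecidableEq V] {τ₁ τ₂ : Finset V}
    {C₁ C₂ : Finset (Finset V)}
    (h : τ₁.image Sum.inl ∪ C₁.image Sum.inr = τ₂.image Sum.inl ∪ C₂.image Sum.inr) :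
    τ₁ = τ₂ ∧ C₁ = C₂ := by
  constructor
  · ext a
    have := Finset.ext_iff.mp h (Sum.inl a)
    simpa using this
  · ext s
    have := Finset.ext_iff.mp h (Sum.inr s)
    simpa using this

/-- every simplex of the biased derived subdivision not contained in `Γ`
decomposes uniquely as a disjoint union of a (possibly empty) simplex `τ` of `Γ` and a
nonempty chain `σ₁ ⊊ … ⊊ σ_k` of simplices of `Δ` not in `Γ`, with `τ ⊆ σ₁`. -/
theorem biased_unique_decomposition {V : Type*} [DecidableEq V] (Γ Δ : Set (Finset V))
    (hΓ : IsComplex Γ) (hΔ : IsComplex Δ) (hind : Induced Γ Δ)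
    (σ : Finset (V ⊕ Finset V)) (hσ : σ ∈ biased Γ Δ) (hσΓ : σ ∉ inlify Γ) :
    ∃! p : Finset V × Finset (Finset V),
      p.1 ∈ Γ ∧
      (↑p.2 : Set (Finset V)) ⊆ {s | s ∈ Δ ∧ s ∉ Γ} ∧
      p.2.Nonempty ∧
      IsChain (· ⊆ ·) (↑p.2 : Set (Finset V)) ∧
      (∀ s ∈ p.2, p.1 ⊆ s) ∧
      σ = p.1.image Sum.inl ∪ p.2.image Sum.inr := by
  obtain ⟨τ, hτ, C, hC1, hC2, hC3, heq⟩ := hσ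
  have hCne : C.Nonempty := by
    rcases C.eq_empty_or_nonempty with h | h
    · exfalso; apply hσΓ
      exact ⟨τ, hτ, by simp [heq, h]⟩
    · exact h
  refine ⟨(τ, C), ⟨hτ, hC1, hCne, hC2, hC3, heq⟩, ?_⟩
  rintro ⟨τ', C'⟩ ⟨_, _, _, _, _, heq'⟩
  obtain ⟨h1, h2⟩ := union_image_inj (heq'.symm.trans heq)
  exact Prod.ext h1 h2

end Fary
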